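/- Let p > 1 and δ > 0, and adopt the random-design and kernel assumptions below. Fix x ∈ (a,b) and j ∈ {0,1}, and for each n and i ≤ n let a_{n,i} := h_n^{−j}·√(h_n/n)·(X_i − x)^j·|ε_i|^{p−1}·sign(ε_i)·K_{h_n}(X_i − x) denote the i-th summand of V_{j,n}. Then the Lyapunov condition of order 2 + δ holds: there exist C > 0 and N such that for all n ≥ N, Σ_{i=1}^n E[|a_{n,i}|^{2+δ}] ≤ C·(n·h_n)^{−δ/2}; in particular, since n·h_n → ∞, Σ_{i=1}^n E[|a_{n,i}|^{2+δ}] → 0 as n → ∞. -/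

import Mathlib

open MeasureTheory ProbabilityTheory Filter Real

/-- Convergence in distribution (weak convergence of laws) of a sequence of real
random variables to a limiting distribution `μ`, phrased via bounded continuous
test functions. -/
def TendstoInDistribution {Ω : Type*} [MeasurableSpace Ω] (P : Measure Ω)
    (V : ℕ → Ω → ℝ) (μ : Measure ℝ) : Prop :=
  ∀ g : BoundedContinuousFunction ℝ ℝ,
    Tendsto (fun n => ∫ ω, g (V n ω) ∂P) atTop (nhds (∫ t, g t ∂μ))

/-- Rescaled kernel `K_h(u) = h⁻¹ K(u/h)`. -/
noncomputable def Kh (K : ℝ → ℝ) (h u : ℝ) : ℝ := h⁻¹ * K (u / h)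

lemma abs_sign_le' (r : ℝ) : |Real.sign r| ≤ 1 := by
  rcases Real.sign_apply_eq r with h | h | h <;> rw [h] <;> norm_num

lemma alg_aux' {δ h n : ℝ} (hh : 0 < h) (hn : 0 < n) :
    n * (Real.sqrt (h / n) / h) ^ (2 + δ) * h = (n * h) ^ (-(δ / 2)) := by
  have hhn : (0:ℝ) < h / n := div_pos hh hn
  have hs : (0:ℝ) < Real.sqrt (h / n) / h := div_pos (Real.sqrt_pos.2 hhn) hh
  have hL : 0 < n * (Real.sqrt (h / n) / h) ^ (2 + δ) * h :=
    mul_pos (mul_pos hn (Real.rpow_pos_of_pos hs _)) hh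
  have hR : 0 < (n * h) ^ (-(δ / 2)) := Real.rpow_pos_of_pos (mul_pos hn hh) _
  rw [← Real.exp_log hL, ← Real.exp_log hR]
  congr 1
  rw [Real.log_mul (mul_pos hn (Real.rpow_pos_of_pos hs _)).ne' hh.ne',
      Real.log_mul hn.ne' (Real.rpow_pos_of_pos hs _).ne',
      Real.log_rpow hs, Real.log_rpow (mul_pos hn hh),
      Real.log_div (Real.sqrt_pos.2 hhn).ne' hh.ne', Real.log_sqrt hhn.le,
      Real.log_div hh.ne' hn.ne', Real.log_mul hn.ne' hh.ne']
  ring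

/-- The Lyapunov condition of order `2 + δ` holds for the
triangular array of summands `a_{n,i}` of `V_{j,n}`:
`Σ_{i<n} E[|a_{n,i}|^{2+δ}] ≤ C·(n·hₙ)^{−δ/2}` for large `n`, and in particular
this sum tends to `0`. -/
theorem statement16
    {Ω : Type*} [MeasurableSpace Ω] (P : Measure Ω) [IsProbabilityMeasure P]
    (p δ : ℝ) (hp : 1 < p) (hδ : 0 < δ)
    (a b : ℝ) (f K : ℝ → ℝ) (X ε : ℕ → Ω → ℝ) (hn : ℕ → ℝ)
    -- kernel assumptions
    (hK_meas : Measurable K) (hK_nonneg : ∀ u, 0 ≤ K u)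
    (hK_bdd : ∃ C, ∀ u, K u ≤ C) (hK_symm : ∀ u, K (-u) = K u)
    (hK_supp : Function.support K ⊆ Set.Icc (-1) 1)
    (hK_int : (∫ u, K u) = 1)
    -- random design: i.i.d. with density f supported on (a,b)
    (hX_meas : ∀ i, Measurable (X i))
    (hX_dist : ∀ i, Measure.map (X i) P
      = (volume : Measure ℝ).withDensity (fun t => ENNReal.ofReal (f t)))
    (hX_indep : iIndepFun X P)
    (hf_nonneg : ∀ t, 0 ≤ f t)
    (hf_supp : Function.support f ⊆ Set.Ioo a b)
    (hf_diff : Differentiable ℝ f)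
    (hf_deriv_bdd : ∃ C, ∀ t, |deriv f t| ≤ C)
    -- errors: i.i.d., independent of the design, with the moment conditions
    (hε_meas : ∀ i, Measurable (ε i))
    (hε_ident : ∀ i, Measure.map (ε i) P = Measure.map (ε 0) P)
    (hε_indep : iIndepFun ε P)
    (hXε_indep : IndepFun (fun ω i => X i ω) (fun ω i => ε i ω) P)
    (hε_mom1 : (∫ ω, |ε 0 ω| ^ (p - 1) * Real.sign (ε 0 ω) ∂P) = 0)
    (hε_mom2 : Integrable (fun ω => |ε 0 ω| ^ ((p - 1) * (2 + δ))) P)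
    -- bandwidths
    (hh_pos : ∀ n, 0 < hn n)
    (hh_to0 : Tendsto hn atTop (nhds 0))
    (hnh : Tendsto (fun n : ℕ => (n : ℝ) * hn n) atTop atTop)
    -- evaluation point and exponent j ∈ {0, 1}
    (x : ℝ) (hx : x ∈ Set.Ioo a b) (j : ℕ) (hj : j ≤ 1)
    -- the summands of V_{j,n}
    (A : ℕ → ℕ → Ω → ℝ)
    (hA : ∀ n i ω, A n i ω =
      ((hn n) ^ j)⁻¹ * Real.sqrt (hn n / n) *
        ((X i ω - x) ^ j * (|ε i ω| ^ (p - 1) * Real.sign (ε i ω)) *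
          Kh K (hn n) (X i ω - x))) :
    (∃ C > (0 : ℝ), ∃ N : ℕ, ∀ n ≥ N,
      (∑ i ∈ Finset.range n, ∫ ω, |A n i ω| ^ (2 + δ) ∂P) ≤
        C * ((n : ℝ) * hn n) ^ (-(δ / 2))) ∧
    Tendsto (fun n => ∑ i ∈ Finset.range n, ∫ ω, |A n i ω| ^ (2 + δ) ∂P)
      atTop (nhds 0) := by
  classical
  obtain ⟨CK, hCK⟩ := hK_bdd
  have hCK0 : 0 ≤ CK := le_trans (hK_nonneg 0) (hCK 0)
  obtain ⟨Cf', hCf'⟩ := hf_deriv_bdd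
  have hCf'0 : 0 ≤ Cf' := le_trans (abs_nonneg _) (hCf' x)
  have h2δ : (0:ℝ) < 2 + δ := by linarith
  set q : ℝ := (p - 1) * (2 + δ) with hqdef
  have hq0 : 0 ≤ q := mul_nonneg (by linarith) h2δ.le
  set φ : ℝ → ℝ := fun t => |t| ^ q with hφdef
  have hφ_meas : Measurable φ :=
    (Real.continuous_rpow_const hq0).measurable.comp continuous_abs.measurable
  set M : ℝ := ∫ ω, φ (ε 0 ω) ∂P with hMdef
  have hM0 : 0 ≤ M :=
    integral_nonneg fun ω => Real.rpow_nonneg (abs_nonneg _) _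
  set Cf : ℝ := f x + Cf' with hCfdef
  have hCf0 : 0 ≤ Cf := add_nonneg (hf_nonneg x) hCf'0
  -- moment transfer to each i
  have hε_int : ∀ i, Integrable (fun ω => φ (ε i ω)) P := by
    intro i
    have h0 : Integrable (φ ∘ ε 0) P := hε_mom2
    have h1 : Integrable φ (Measure.map (ε 0) P) :=
      (integrable_map_measure hφ_meas.aestronglyMeasurable
        (hε_meas 0).aemeasurable).2 h0
    rw [← hε_ident i] at h1
    exact (integrable_map_measure hφ_meas.aestronglyMeasurable
      (hε_meas i).aemeasurable).1 h1
  have hε_int_eq : ∀ i, (∫ ω, φ (ε i ω) ∂P) = M := by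
    intro i
    calc (∫ ω, φ (ε i ω) ∂P)
        = ∫ t, φ t ∂(Measure.map (ε i) P) :=
          (integral_map (hε_meas i).aemeasurable hφ_meas.aestronglyMeasurable).symm
      _ = ∫ t, φ t ∂(Measure.map (ε 0) P) := by rw [hε_ident i]
      _ = M := integral_map (hε_meas 0).aemeasurable hφ_meas.aestronglyMeasurable
  obtain ⟨N₁, hN₁⟩ := (eventually_atTop).1 (hh_to0.eventually (Iio_mem_nhds one_pos))
  -- the key per-term bound
  have key : ∀ n : ℕ, 0 < n → hn n < 1 → ∀ i,
      (∫ ω, |A n i ω| ^ (2 + δ) ∂P) ≤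
        (CK ^ (2 + δ) * (Real.sqrt (hn n / n) / hn n) ^ (2 + δ)) *
          (Cf * (2 * hn n) * M) := by
    intro n hnpos hn1 i
    set h : ℝ := hn n with hhdef
    have h0 : (0:ℝ) < h := hh_pos n
    have hnR : (0:ℝ) < (n:ℝ) := Nat.cast_pos.2 hnpos
    set B : ℝ := CK * (Real.sqrt (h / n) / h) with hBdef
    have hB0 : 0 ≤ B :=
      mul_nonneg hCK0 (div_nonneg (Real.sqrt_nonneg _) h0.le)
    set S : Set ℝ := Set.Icc (x - h) (x + h) with hSdef
    set ψ : ℝ → ℝ := S.indicator 1 with hψdef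
    have hψ_meas : Measurable ψ := measurable_one.indicator measurableSet_Icc
    have hψ_nonneg : ∀ t, 0 ≤ ψ t := fun t =>
      Set.indicator_nonneg (fun _ _ => zero_le_one) t
    have hψ_le : ∀ t, ψ t ≤ 1 := fun t =>
      Set.indicator_le' (fun _ _ => le_refl 1) (fun _ _ => zero_le_one) t
    -- pointwise bound
    have hpt : ∀ ω, |A n i ω| ^ (2 + δ) ≤ B ^ (2 + δ) * (ψ (X i ω) * φ (ε i ω)) := by
      intro ω
      by_cases hcase : |X i ω - x| ≤ h
      · have hmem : X i ω ∈ S := by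
          rcases abs_le.1 hcase with ⟨h1, h2⟩
          exact ⟨by linarith, by linarith⟩
        have hψ1 : ψ (X i ω) = 1 := Set.indicator_of_mem hmem 1
        have hKh_le : Kh K h (X i ω - x) ≤ CK / h := by
          have hle := mul_le_mul_of_nonneg_left (hCK ((X i ω - x) / h))
            (inv_nonneg.2 h0.le)
          simpa [Kh, inv_mul_eq_div] using hle
        have hKh_nonneg : 0 ≤ Kh K h (X i ω - x) :=
          mul_nonneg (inv_nonneg.2 h0.le) (hK_nonneg _)
        have hE0 : 0 ≤ |ε i ω| ^ (p - 1) := Real.rpow_nonneg (abs_nonneg _) _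
        have hAabs : |A n i ω| = (h ^ j)⁻¹ * Real.sqrt (h / n) *
            (|X i ω - x| ^ j * (|ε i ω| ^ (p - 1) * |Real.sign (ε i ω)|) *
              Kh K h (X i ω - x)) := by
          rw [hA]
          rw [abs_mul, abs_mul, abs_mul, abs_mul, abs_mul, abs_pow,
            abs_of_nonneg (inv_nonneg.2 (pow_nonneg h0.le j)),
            abs_of_nonneg (Real.sqrt_nonneg _), abs_of_nonneg hE0,
            abs_of_nonneg hKh_nonneg]
        have hAle : |A n i ω| ≤ B * |ε i ω| ^ (p - 1) := by
          rw [hAabs]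
          have step : |X i ω - x| ^ j * (|ε i ω| ^ (p - 1) * |Real.sign (ε i ω)|) *
              Kh K h (X i ω - x) ≤ h ^ j * (|ε i ω| ^ (p - 1) * 1) * (CK / h) := by
            have A1 : |X i ω - x| ^ j ≤ h ^ j :=
              pow_le_pow_left₀ (abs_nonneg _) hcase j
            have A2 : |ε i ω| ^ (p - 1) * |Real.sign (ε i ω)| ≤
                |ε i ω| ^ (p - 1) * 1 :=
              mul_le_mul_of_nonneg_left (abs_sign_le' _) hE0
            exact mul_le_mul
              (mul_le_mul A1 A2 (mul_nonneg hE0 (abs_nonneg _)) (pow_nonneg h0.le j))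
              hKh_le hKh_nonneg
              (mul_nonneg (pow_nonneg h0.le j) (mul_nonneg hE0 zero_le_one))
          calc (h ^ j)⁻¹ * Real.sqrt (h / n) *
              (|X i ω - x| ^ j * (|ε i ω| ^ (p - 1) * |Real.sign (ε i ω)|) *
                Kh K h (X i ω - x))
              ≤ (h ^ j)⁻¹ * Real.sqrt (h / n) *
                (h ^ j * (|ε i ω| ^ (p - 1) * 1) * (CK / h)) := by
                apply mul_le_mul_of_nonneg_left step
                exact mul_nonneg (inv_nonneg.2 (pow_nonneg h0.le j)) (Real.sqrt_nonneg _)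
            _ = B * |ε i ω| ^ (p - 1) := by
                rw [hBdef]
                field_simp
        calc |A n i ω| ^ (2 + δ)
            ≤ (B * |ε i ω| ^ (p - 1)) ^ (2 + δ) :=
              Real.rpow_le_rpow (abs_nonneg _) hAle h2δ.le
          _ = B ^ (2 + δ) * (|ε i ω| ^ (p - 1)) ^ (2 + δ) := Real.mul_rpow hB0 hE0
          _ = B ^ (2 + δ) * φ (ε i ω) := by
              rw [hφdef, hqdef, ← Real.rpow_mul (abs_nonneg _)]
          _ = B ^ (2 + δ) * (ψ (X i ω) * φ (ε i ω)) := by rw [hψ1, one_mul]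
      · have hK0 : K ((X i ω - x) / h) = 0 := by
          by_contra hne
          rcases hK_supp (Function.mem_support.2 hne) with ⟨h1, h2⟩
          have hb1 : X i ω - x ≤ h := by
            have := (div_le_one h0).1 h2; linarith
          have hb2 : -h ≤ X i ω - x := by
            have h3 : (-1 : ℝ) * h ≤ (X i ω - x) / h * h :=
              mul_le_mul_of_nonneg_right h1 h0.le
            rw [div_mul_cancel₀ _ h0.ne'] at h3
            linarith
          exact hcase (abs_le.2 ⟨hb2, hb1⟩)
        have hA0 : A n i ω = 0 := by
          rw [hA, ← hhdef]; simp [Kh, hK0]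
        rw [hA0, abs_zero, Real.zero_rpow h2δ.ne']
        exact mul_nonneg (Real.rpow_nonneg hB0 _)
          (mul_nonneg (hψ_nonneg _) (Real.rpow_nonneg (abs_nonneg _) _))
    -- integrability of the dominating function
    have hg_int : Integrable (fun ω => B ^ (2 + δ) * (ψ (X i ω) * φ (ε i ω))) P := by
      apply Integrable.const_mul
      apply (hε_int i).bdd_mul (c := 1) ((hψ_meas.comp (hX_meas i)).aestronglyMeasurable)
      refine Filter.Eventually.of_forall (fun ω => ?_)
      calc ‖ψ (X i ω)‖ = ψ (X i ω) := Real.norm_of_nonneg (hψ_nonneg _)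
        _ ≤ 1 := hψ_le _
    -- independence factorization
    have hindep : IndepFun (fun ω => ψ (X i ω)) (fun ω => φ (ε i ω)) P := by
      have h1 : IndepFun (X i) (ε i) P :=
        hXε_indep.comp (measurable_pi_apply i) (measurable_pi_apply i)
      exact h1.comp hψ_meas hφ_meas
    have hmul : (∫ ω, ψ (X i ω) * φ (ε i ω) ∂P)
        = (∫ ω, ψ (X i ω) ∂P) * (∫ ω, φ (ε i ω) ∂P) :=
      hindep.integral_mul_eq_mul_integral ((hψ_meas.comp (hX_meas i)).aestronglyMeasurable)
        ((hφ_meas.comp (hε_meas i)).aestronglyMeasurable)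
    -- probability that X i lands near x
    have hPind : (∫ ω, ψ (X i ω) ∂P) ≤ Cf * (2 * h) := by
      have hmap : (∫ ω, ψ (X i ω) ∂P) = ∫ t, ψ t ∂(Measure.map (X i) P) :=
        (integral_map (hX_meas i).aemeasurable hψ_meas.aestronglyMeasurable).symm
      rw [hmap, hX_dist i, hψdef, integral_indicator_one measurableSet_Icc]
      have hbound : (volume.withDensity (fun t => ENNReal.ofReal (f t))) S
          ≤ ENNReal.ofReal (Cf * (2 * h)) := by
        rw [withDensity_apply _ measurableSet_Icc]
        calc ∫⁻ t in S, ENNReal.ofReal (f t) ∂volume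
            ≤ ∫⁻ _ in S, ENNReal.ofReal Cf ∂volume := by
              apply setLIntegral_mono measurable_const
              intro t ht
              apply ENNReal.ofReal_le_ofReal
              have hmvt : |f t - f x| ≤ Cf' * |t - x| := by
                have := Convex.norm_image_sub_le_of_norm_deriv_le
                  (f := f) (s := Set.univ) (fun y _ => hf_diff y)
                  (fun y _ => by simpa [Real.norm_eq_abs] using hCf' y)
                  convex_univ (Set.mem_univ x) (Set.mem_univ t)
                simpa [Real.norm_eq_abs] using this
              have htx : |t - x| ≤ h := by
                rcases ht with ⟨h1, h2⟩
                exact abs_le.2 ⟨by linarith, by linarith⟩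
              have : f t - f x ≤ Cf' := by
                calc f t - f x ≤ |f t - f x| := le_abs_self _
                  _ ≤ Cf' * |t - x| := hmvt
                  _ ≤ Cf' * 1 := by
                      apply mul_le_mul_of_nonneg_left _ hCf'0
                      exact htx.trans hn1.le
                  _ = Cf' := mul_one _
              rw [hCfdef]; linarith
          _ = ENNReal.ofReal Cf * volume S := setLIntegral_const S _
          _ = ENNReal.ofReal Cf * ENNReal.ofReal (2 * h) := by
              rw [hSdef, Real.volume_Icc]
              congr 1
              ring_nf
          _ = ENNReal.ofReal (Cf * (2 * h)) := (ENNReal.ofReal_mul hCf0).symm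
      calc ((volume.withDensity (fun t => ENNReal.ofReal (f t))) S).toReal
          ≤ (ENNReal.ofReal (Cf * (2 * h))).toReal :=
            ENNReal.toReal_mono ENNReal.ofReal_ne_top hbound
        _ = Cf * (2 * h) := ENNReal.toReal_ofReal (by positivity)
    have hψint0 : 0 ≤ ∫ ω, ψ (X i ω) ∂P := integral_nonneg fun ω => hψ_nonneg _
    -- put it together
    calc (∫ ω, |A n i ω| ^ (2 + δ) ∂P)
        ≤ ∫ ω, B ^ (2 + δ) * (ψ (X i ω) * φ (ε i ω)) ∂P := by
          apply integral_mono_of_nonneg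
          · exact Filter.Eventually.of_forall fun ω =>
              Real.rpow_nonneg (abs_nonneg _) _
          · exact hg_int
          · exact Filter.Eventually.of_forall hpt
      _ = B ^ (2 + δ) * ((∫ ω, ψ (X i ω) ∂P) * M) := by
          rw [integral_const_mul, hmul, hε_int_eq i]
      _ ≤ B ^ (2 + δ) * ((Cf * (2 * h)) * M) := by
          apply mul_le_mul_of_nonneg_left _ (Real.rpow_nonneg hB0 _)
          exact mul_le_mul_of_nonneg_right hPind hM0
      _ = (CK ^ (2 + δ) * (Real.sqrt (h / n) / h) ^ (2 + δ)) * (Cf * (2 * h) * M) := by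
          rw [hBdef, Real.mul_rpow hCK0 (div_nonneg (Real.sqrt_nonneg _) h0.le)]
  -- the global constant
  set C : ℝ := 2 * CK ^ (2 + δ) * Cf * M + 1 with hCdef
  have hCpos : 0 < C := by
    have : 0 ≤ 2 * CK ^ (2 + δ) * Cf * M :=
      mul_nonneg (mul_nonneg (mul_nonneg zero_le_two
        (Real.rpow_nonneg hCK0 _)) hCf0) hM0
    linarith
  set N : ℕ := max N₁ 1 with hNdef
  have hmain : ∀ n ≥ N,
      (∑ i ∈ Finset.range n, ∫ ω, |A n i ω| ^ (2 + δ) ∂P) ≤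
        C * ((n : ℝ) * hn n) ^ (-(δ / 2)) := by
    intro n hnN
    have hn1 : hn n < 1 := hN₁ n (le_trans (le_max_left _ _) hnN)
    have hnpos : 0 < n := lt_of_lt_of_le Nat.zero_lt_one (le_trans (le_max_right _ _) hnN)
    have hnR : (0:ℝ) < (n:ℝ) := Nat.cast_pos.2 hnpos
    have h0 : (0:ℝ) < hn n := hh_pos n
    calc (∑ i ∈ Finset.range n, ∫ ω, |A n i ω| ^ (2 + δ) ∂P)
        ≤ ∑ _i ∈ Finset.range n,
            (CK ^ (2 + δ) * (Real.sqrt (hn n / n) / hn n) ^ (2 + δ)) *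
              (Cf * (2 * hn n) * M) :=
          Finset.sum_le_sum fun i _ => key n hnpos hn1 i
      _ = (n : ℝ) * ((CK ^ (2 + δ) * (Real.sqrt (hn n / n) / hn n) ^ (2 + δ)) *
              (Cf * (2 * hn n) * M)) := by
          rw [Finset.sum_const, Finset.card_range, nsmul_eq_mul]
      _ = (2 * CK ^ (2 + δ) * Cf * M) *
            ((n : ℝ) * (Real.sqrt (hn n / n) / hn n) ^ (2 + δ) * hn n) := by ring
      _ = (2 * CK ^ (2 + δ) * Cf * M) * ((n : ℝ) * hn n) ^ (-(δ / 2)) := by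
          rw [alg_aux' h0 hnR]
      _ ≤ C * ((n : ℝ) * hn n) ^ (-(δ / 2)) := by
          apply mul_le_mul_of_nonneg_right _ (Real.rpow_nonneg (by positivity) _)
          rw [hCdef]; linarith
  refine ⟨⟨C, hCpos, N, hmain⟩, ?_⟩
  have hupper : Tendsto (fun n : ℕ => C * ((n : ℝ) * hn n) ^ (-(δ / 2)))
      atTop (nhds 0) := by
    have h1 : Tendsto (fun n : ℕ => ((n : ℝ) * hn n) ^ (-(δ / 2))) atTop (nhds 0) :=
      (tendsto_rpow_neg_atTop (by linarith : (0:ℝ) < δ / 2)).comp hnh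
    simpa using h1.const_mul C
  apply squeeze_zero'
  · exact Filter.Eventually.of_forall fun n =>
      Finset.sum_nonneg fun i _ =>
        integral_nonneg fun ω => Real.rpow_nonneg (abs_nonneg _) _
  · exact Filter.eventually_atTop.2 ⟨N, hmain⟩
  · exact hupper
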